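/- arXiv:1302.1727 — 2 statements merged into one kernel-verified Lean document; each statement's English description precedes it below -/
import Mathlib

section
/- Let p ∈ [0, 1/2]. For every connected simple graph g on n ≥ 2 vertices, the performance measure of the complete graph on n vertices is at least that of g; that is, μ(K_n) ≥ μ(g), where μ(g) = H(g)·K(g), K(g) = n(n−1)/T(g), T(g) is the sum of the geodesic (shortest-path) distances over all ordered pairs of vertices of g, H(g) = (1/n)·Σ_{i∈V} u_i, and u_i = 1 − (p·d_i + 1)/n with d_i the degree of vertex i in g. -/
open SimpleGraph Finset
open scoped Classical

/-- Total distance: sum of geodesic distances over all ordered pairs of vertices. -/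
noncomputable def totalDist {n : ℕ} (g : SimpleGraph (Fin n)) : ℕ :=
  ∑ i : Fin n, ∑ j : Fin n, g.dist i j

/-- Information measure K(g) = n(n-1)/T(g). -/
noncomputable def infoMeasure {n : ℕ} (g : SimpleGraph (Fin n)) : ℝ :=
  ((n : ℝ) * ((n : ℝ) - 1)) / (totalDist g : ℝ)

/-- Secrecy measure H(g) = (1/n) Σ_i u_i with u_i = 1 - (p d_i + 1)/n. -/
noncomputable def secrecy {n : ℕ} (g : SimpleGraph (Fin n)) (p : ℝ) : ℝ :=
  (1 / (n : ℝ)) * ∑ i : Fin n, (1 - (p * (g.degree i : ℝ) + 1) / (n : ℝ))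

/-- Performance measure μ(g) = H(g) · K(g). -/
noncomputable def perf {n : ℕ} (g : SimpleGraph (Fin n)) (p : ℝ) : ℝ :=
  secrecy g p * infoMeasure g

/-- Star graph on `Fin n`: vertex 0 adjacent to all others, no other edges. -/
def starGraph (n : ℕ) : SimpleGraph (Fin n) where
  Adj i j := i ≠ j ∧ ((i : ℕ) = 0 ∨ (j : ℕ) = 0)
  symm := ⟨fun i j h => ⟨h.1.symm, h.2.symm⟩⟩
  loopless := ⟨fun i h => h.1 rfl⟩

/-- Auxiliary real inequality. -/
lemma key_real (N T s p : ℝ) (hN : 2 ≤ N) (hTge : 2*(N*(N-1)) - s ≤ T)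
    (hs0 : 0 ≤ s) (hsA : s ≤ N*(N-1)) (hp1 : p ≤ 1/2) :
    (N*N - N - p*s)/(N*N) * (N*(N-1)/T) ≤ (N-1)*(1-p)/N := by
  have hNpos : (0:ℝ) < N := by linarith
  have hA : (0:ℝ) < N*(N-1) := by nlinarith
  have h2As : (0:ℝ) < 2*(N*(N-1)) - s := by nlinarith
  have hTpos : (0:ℝ) < T := by linarith
  have hHg : (0:ℝ) ≤ (N*N - N - p*s)/(N*N) := by
    apply div_nonneg _ (by positivity)
    nlinarith
  have step1 : (N*N - N - p*s)/(N*N) * (N*(N-1)/T)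
      ≤ (N*N - N - p*s)/(N*N) * (N*(N-1)/(2*(N*(N-1)) - s)) :=
    mul_le_mul_of_nonneg_left
      (div_le_div_of_nonneg_left (le_of_lt hA) h2As hTge) hHg
  have step2 : (N*N - N - p*s)/(N*N) * (N*(N-1)/(2*(N*(N-1)) - s))
      ≤ (N-1)*(1-p)/N := by
    rw [div_mul_div_comm, div_le_div_iff₀ (mul_pos (by positivity) h2As) hNpos]
    nlinarith [mul_nonneg (mul_nonneg (by nlinarith : (0:ℝ) ≤ 1 - 2*p)
      (by nlinarith : (0:ℝ) ≤ N*(N-1) - s)) (le_of_lt (mul_pos hNpos hA))]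
  linarith

/-- for p ∈ [0,1/2], the complete graph is optimal among connected
graphs on n ≥ 2 vertices. -/
theorem complete_graph_optimal {n : ℕ} (hn : 2 ≤ n) (p : ℝ)
    (hp0 : 0 ≤ p) (hp1 : p ≤ 1 / 2)
    (g : SimpleGraph (Fin n)) (hg : g.Connected) :
    perf (⊤ : SimpleGraph (Fin n)) p ≥ perf g p := by
  classical
  have hn1 : 1 ≤ n := by omega
  -- degree as indicator sum
  have hdeg : ∀ i : Fin n, g.degree i = ∑ j : Fin n, (if g.Adj i j then 1 else 0) := by
    intro i
    rw [SimpleGraph.degree, neighborFinset_eq_filter, Finset.card_filter]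
  -- key counting bound
  have hT1 : 2 * (n * n) ≤ totalDist g + (∑ i : Fin n, g.degree i) + 2 * n := by
    have hpt : ∀ i j : Fin n,
        2 ≤ g.dist i j + (if g.Adj i j then 1 else 0) + (if i = j then 2 else 0) := by
      intro i j
      by_cases hij : i = j
      · simp [hij]
      · rw [if_neg hij]
        by_cases ha : g.Adj i j
        · rw [if_pos ha, (SimpleGraph.dist_eq_one_iff_adj (G := g)).mpr ha]
        · rw [if_neg ha]
          have h1 : 0 < g.dist i j := hg.pos_dist_of_ne hij
          have h2 : g.dist i j ≠ 1 := fun h =>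
            ha ((SimpleGraph.dist_eq_one_iff_adj (G := g)).mp h)
          omega
    calc 2 * (n * n) = ∑ _i : Fin n, ∑ _j : Fin n, 2 := by
          simp [Finset.sum_const, mul_comm]; ring
      _ ≤ ∑ i : Fin n, ∑ j : Fin n,
            (g.dist i j + (if g.Adj i j then 1 else 0) + (if i = j then 2 else 0)) := by
          apply Finset.sum_le_sum; intro i _
          exact Finset.sum_le_sum fun j _ => hpt i j
      _ = totalDist g + (∑ i : Fin n, g.degree i) + 2 * n := by
          simp only [Finset.sum_add_distrib]
          rw [totalDist]
          congr 1
          · congr 1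
            exact Finset.sum_congr rfl fun i _ => (hdeg i).symm
          · simp [Finset.sum_ite_eq, Finset.card_univ, mul_comm]
  -- degree sum bound
  have hS_le : (∑ i : Fin n, g.degree i) ≤ n * (n - 1) := by
    calc (∑ i : Fin n, g.degree i) ≤ ∑ _i : Fin n, (n - 1) :=
          Finset.sum_le_sum fun i _ => by
            have := g.degree_lt_card_verts i
            rw [Fintype.card_fin] at this; omega
      _ = n * (n - 1) := by simp [Finset.sum_const, Finset.card_univ, mul_comm]
  -- complete graph data
  have hcast : ((n * (n - 1) : ℕ) : ℝ) = (n : ℝ) * ((n : ℝ) - 1) := by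
    push_cast [Nat.cast_sub hn1]; ring
  have hTtop : totalDist (⊤ : SimpleGraph (Fin n)) = n * (n - 1) := by
    rw [totalDist]
    have hrow : ∀ i : Fin n, ∑ j : Fin n, (⊤ : SimpleGraph (Fin n)).dist i j = n - 1 := by
      intro i
      have h0 : ∑ j : Fin n,
          ((⊤ : SimpleGraph (Fin n)).dist i j + (if i = j then 1 else 0)) = n := by
        have hone : ∀ j : Fin n,
            (⊤ : SimpleGraph (Fin n)).dist i j + (if i = j then 1 else 0) = 1 := by
          intro j
          by_cases hij : i = j
          · simp [hij]
          · rw [if_neg hij, SimpleGraph.dist_top_of_ne hij]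
        simp [hone]
      rw [Finset.sum_add_distrib, Finset.sum_ite_eq] at h0
      simp at h0
      omega
    simp [hrow, Finset.sum_const, Finset.card_univ, mul_comm]
  -- real facts
  have hN2 : (2 : ℝ) ≤ (n : ℝ) := by exact_mod_cast hn
  have hNpos : (0 : ℝ) < (n : ℝ) := by linarith
  have hA : (0 : ℝ) < (n : ℝ) * ((n : ℝ) - 1) := by nlinarith
  have hsA : ((∑ i : Fin n, g.degree i : ℕ) : ℝ) ≤ (n : ℝ) * ((n : ℝ) - 1) := by
    rw [← hcast]; exact_mod_cast hS_le
  have hs0 : (0 : ℝ) ≤ ((∑ i : Fin n, g.degree i : ℕ) : ℝ) := by positivity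
  have hTge : 2 * ((n : ℝ) * ((n : ℝ) - 1)) - ((∑ i : Fin n, g.degree i : ℕ) : ℝ)
      ≤ ((totalDist g : ℕ) : ℝ) := by
    have h1 : ((2 * (n * n) : ℕ) : ℝ)
        ≤ ((totalDist g + (∑ i : Fin n, g.degree i) + 2 * n : ℕ) : ℝ) :=
      Nat.cast_le.mpr hT1
    push_cast at h1
    have hc2 : (∑ x : Fin n, ((g.degree x : ℕ) : ℝ)) = ((∑ i : Fin n, g.degree i : ℕ) : ℝ) := by
      push_cast; ring
    rw [hc2] at h1
    nlinarith
  -- compute secrecy g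
  have hsec : secrecy g p = ((n : ℝ) * (n : ℝ) - (n : ℝ)
      - p * ((∑ i : Fin n, g.degree i : ℕ) : ℝ)) / ((n : ℝ) * (n : ℝ)) := by
    rw [secrecy]
    have hsum : ∑ i : Fin n, (1 - (p * (g.degree i : ℝ) + 1) / (n : ℝ))
        = (n : ℝ) - (p * ((∑ i : Fin n, g.degree i : ℕ) : ℝ) + (n : ℝ)) / (n : ℝ) := by
      rw [Finset.sum_sub_distrib, Finset.sum_const, Finset.card_univ, Fintype.card_fin]
      rw [← Finset.sum_div, Finset.sum_add_distrib, ← Finset.mul_sum, Finset.sum_const,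
        Finset.card_univ, Fintype.card_fin]
      have hc : ∑ i : Fin n, (g.degree i : ℝ) = ((∑ i : Fin n, g.degree i : ℕ) : ℝ) := by
        push_cast; ring
      rw [hc]
      simp [nsmul_eq_mul, mul_one]
    rw [hsum]
    field_simp
    ring
  -- compute perf of complete graph
  have hdtop : ∀ (i : Fin n) (inst : Fintype ((⊤ : SimpleGraph (Fin n)).neighborSet i)),
      ((@SimpleGraph.degree (Fin n) ⊤ i inst : ℕ) : ℝ) = (n : ℝ) - 1 := by
    intro i inst
    rw [Subsingleton.elim inst (by infer_instance)]
    have hd : (⊤ : SimpleGraph (Fin n)).degree i = n - 1 := by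
      rw [← SimpleGraph.card_neighborSet_eq_degree]
      simp [SimpleGraph.neighborSet, Fintype.card_subtype_compl]
      have hfe : (Finset.univ.filter fun x : Fin n => ¬ i = x) = Finset.univ.erase i := by
        ext x; simp [eq_comm]
      rw [hfe, Finset.card_erase_of_mem (Finset.mem_univ _), Finset.card_univ, Fintype.card_fin]
    rw [hd, Nat.cast_sub hn1]
    push_cast; ring
  have hperftop : perf (⊤ : SimpleGraph (Fin n)) p = ((n : ℝ) - 1) * (1 - p) / (n : ℝ) := by
    rw [perf, secrecy, infoMeasure, hTtop, hcast]
    simp only [hdtop]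
    rw [Finset.sum_const, Finset.card_univ, Fintype.card_fin, div_self (ne_of_gt hA)]
    rw [nsmul_eq_mul]
    field_simp
    ring
  rw [hperftop, perf, hsec, infoMeasure]
  exact key_real (n : ℝ) ((totalDist g : ℕ) : ℝ) ((∑ i : Fin n, g.degree i : ℕ) : ℝ) p
    hN2 hTge hs0 hsA hp1
end

section
/- Let p ∈ [1/2, 1]. For every connected simple graph g on n ≥ 2 vertices, the performance measure of the star graph on n vertices is at least that of g; that is, μ(S_n) ≥ μ(g), where μ(g) = H(g)·K(g), K(g) = n(n−1)/T(g), T(g) is the sum of the geodesic (shortest-path) distances over all ordered pairs of vertices of g, H(g) = (1/n)·Σ_{i∈V} u_i, and u_i = 1 − (p·d_i + 1)/n with d_i the degree of vertex i in g. -/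
open SimpleGraph Finset
open scoped Classical

/-! ### Auxiliary lemmas -/

section Aux

variable {n : ℕ}

/-- A connected graph: every nonroot vertex has a neighbor strictly closer to the root. -/
lemma exists_parent (g : SimpleGraph (Fin n)) (hg : g.Connected) (r v : Fin n) (hv : v ≠ r) :
    ∃ w, g.Adj v w ∧ g.dist w r + 1 = g.dist v r := by
  have hd0 : g.dist v r ≠ 0 :=
    SimpleGraph.dist_ne_zero_iff_ne_and_reachable.2 ⟨hv, hg v r⟩
  obtain ⟨p, hp⟩ := (hg v r).exists_walk_length_eq_dist
  cases p with
  | nil => exact absurd rfl hv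
  | cons h q =>
    rename_i w
    refine ⟨w, h, ?_⟩
    have h1 : g.dist w r ≤ q.length := SimpleGraph.dist_le q
    have h2 : q.length + 1 = g.dist v r := by
      simpa [SimpleGraph.Walk.length_cons] using hp
    have h3 : g.dist v r ≤ g.dist v w + g.dist w r := hg.dist_triangle
    have h4 : g.dist v w = 1 := SimpleGraph.dist_eq_one_iff_adj.2 h
    omega

/-- A connected graph on `n` vertices has at least `n - 1` edges (degree-sum form). -/
lemma sum_degree_lb (g : SimpleGraph (Fin n)) (hg : g.Connected) (hn : 2 ≤ n) :
    2 * (n - 1) ≤ ∑ i : Fin n, g.degree i := by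
  haveI hnz : NeZero n := ⟨by omega⟩
  rw [SimpleGraph.sum_degrees_eq_twice_card_edges]
  have key : n - 1 ≤ g.edgeFinset.card := by
    set r : Fin n := 0 with hr
    have hpar : ∀ v : Fin n, ∃ w, v ≠ r → g.Adj v w ∧ g.dist w r + 1 = g.dist v r := by
      intro v
      by_cases hv : v = r
      · exact ⟨v, fun h => absurd hv h⟩
      · obtain ⟨w, hw⟩ := exists_parent g hg r v hv
        exact ⟨w, fun _ => hw⟩
    choose par hpar using hpar
    have hcard : (Finset.univ.erase r).card = n - 1 := by
      rw [Finset.card_erase_of_mem (Finset.mem_univ r), Finset.card_univ, Fintype.card_fin]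
    rw [← hcard]
    apply Finset.card_le_card_of_injOn (fun v => s(v, par v))
    · intro v hv
      have hv' : v ≠ r := by simpa using (Finset.mem_erase.1 hv).1
      rw [Finset.mem_coe, SimpleGraph.mem_edgeFinset, SimpleGraph.mem_edgeSet]
      exact (hpar v hv').1
    · intro a ha b hb hab
      simp only [Finset.coe_erase, Set.mem_diff, Finset.mem_coe, Finset.coe_univ,
        Set.mem_singleton_iff] at ha hb
      have ha' : a ≠ r := by
        intro h; exact ha.2 (by simpa [h] using Set.mem_singleton r)
      have hb' : b ≠ r := by
        intro h; exact hb.2 (by simpa [h] using Set.mem_singleton r)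
      obtain ⟨hadja, hdista⟩ := hpar a ha'
      obtain ⟨hadjb, hdistb⟩ := hpar b hb'
      rcases Sym2.eq_iff.1 hab with ⟨h1, _⟩ | ⟨h1, h2⟩
      · exact h1
      · -- a = par b and par a = b : contradiction on distances
        exfalso
        rw [h2] at hdista
        rw [← h1] at hdistb
        omega
  omega

/-- Pointwise: distance + adjacency-indicator ≥ 2·(distinctness indicator). -/
lemma totalDist_lb (g : SimpleGraph (Fin n)) (hg : g.Connected) :
    2 * (n * n - n) ≤ totalDist g + ∑ i : Fin n, g.degree i := by
  have hpt : ∀ i j : Fin n,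
      (if i = j then 0 else 2) ≤ g.dist i j + (if g.Adj i j then 1 else 0) := by
    intro i j
    by_cases hij : i = j
    · simp [hij]
    · by_cases hadj : g.Adj i j
      · have : g.dist i j = 1 := SimpleGraph.dist_eq_one_iff_adj.2 hadj
        simp [hij, hadj, this]
      · have h0 : g.dist i j ≠ 0 :=
          SimpleGraph.dist_ne_zero_iff_ne_and_reachable.2 ⟨hij, hg i j⟩
        have h1 : g.dist i j ≠ 1 := fun h => hadj (SimpleGraph.dist_eq_one_iff_adj.1 h)
        simp only [hij, if_neg, hadj, if_false]
        omega
  have hdeg : ∀ i : Fin n, g.degree i = ∑ j : Fin n, (if g.Adj i j then 1 else 0) := by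
    intro i
    rw [SimpleGraph.degree, SimpleGraph.neighborFinset_eq_filter, Finset.card_filter]
  have hlhs : ∀ i : Fin n, ∑ j : Fin n, (if i = j then 0 else 2) = 2 * n - 2 := by
    intro i
    have : (∑ j : Fin n, (if i = j then 0 else 2)) + 2 = 2 * n := by
      have : ∀ j : Fin n, (if i = j then 0 else 2) + (if i = j then 2 else 0) = 2 := by
        intro j; by_cases h : i = j <;> simp [h]
      calc (∑ j : Fin n, (if i = j then 0 else 2)) + 2
          = ∑ j : Fin n, ((if i = j then 0 else 2) + (if i = j then 2 else 0)) := by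
            rw [Finset.sum_add_distrib, Finset.sum_ite_eq]
            simp
        _ = 2 * n := by simp [this, Finset.sum_const, mul_comm]
    omega
  have hmain : ∑ i : Fin n, ∑ j : Fin n, (if i = j then 0 else 2)
      ≤ totalDist g + ∑ i : Fin n, g.degree i := by
    rw [totalDist, ← Finset.sum_add_distrib]
    apply Finset.sum_le_sum
    intro i _
    rw [hdeg i, ← Finset.sum_add_distrib]
    exact Finset.sum_le_sum fun j _ => hpt i j
  calc 2 * (n * n - n) = ∑ _i : Fin n, (2 * n - 2) := by
        rw [Finset.sum_const, Finset.card_fin, smul_eq_mul]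
        cases n with
        | zero => simp
        | succ m =>
          zify [show (m + 1) ≤ (m + 1) * (m + 1) from Nat.le_mul_of_pos_left _ (by omega),
            show 2 ≤ 2 * (m + 1) by omega]
          ring
    _ = ∑ i : Fin n, ∑ j : Fin n, (if i = j then 0 else 2) := by
        exact Finset.sum_congr rfl fun i _ => (hlhs i).symm
    _ ≤ _ := hmain

lemma sum_degree_ub (g : SimpleGraph (Fin n)) :
    ∑ i : Fin n, g.degree i ≤ n * (n - 1) := by
  cases n with
  | zero => simp
  | succ m =>
    calc ∑ i : Fin (m + 1), g.degree i ≤ ∑ _i : Fin (m + 1), m := by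
          apply Finset.sum_le_sum
          intro i _
          have := g.degree_lt_card_verts i
          rw [Fintype.card_fin] at this
          omega
      _ = (m + 1) * m := by rw [Finset.sum_const, Finset.card_fin, smul_eq_mul]
      _ = (m + 1) * (m + 1 - 1) := by simp

/-- Star graph: degrees. -/
lemma star_degree_zero [NeZero n] (hn : 2 ≤ n) :
    (_root_.starGraph n).degree (0 : Fin n) = n - 1 := by
  rw [SimpleGraph.degree, SimpleGraph.neighborFinset_eq_filter]
  have : Finset.univ.filter ((_root_.starGraph n).Adj 0) = Finset.univ.erase 0 := by
    ext j
    simp only [Finset.mem_filter, Finset.mem_univ, true_and, Finset.mem_erase, and_true]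
    constructor
    · intro h; exact fun hj => h.1 hj.symm
    · intro h; exact ⟨fun hj => h hj.symm, Or.inl (Fin.val_zero n)⟩
  rw [this, Finset.card_erase_of_mem (Finset.mem_univ _), Finset.card_univ, Fintype.card_fin]

lemma star_degree_ne_zero [NeZero n] (hn : 2 ≤ n) (i : Fin n) (hi : i ≠ 0) :
    (_root_.starGraph n).degree i = 1 := by
  rw [SimpleGraph.degree, SimpleGraph.neighborFinset_eq_filter]
  have : Finset.univ.filter ((_root_.starGraph n).Adj i) = {0} := by
    ext j
    simp only [Finset.mem_filter, Finset.mem_univ, true_and, Finset.mem_singleton]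
    constructor
    · rintro ⟨hij, h0 | h0⟩
      · exact absurd ((Fin.ext (by simp [h0]) : _ = (0:Fin n))) hi
      · exact Fin.ext (by simp [h0])
    · rintro rfl
      exact ⟨hi, Or.inr (Fin.val_zero n)⟩
  rw [this, Finset.card_singleton]

lemma star_sum_degree [NeZero n] (hn : 2 ≤ n) :
    ∑ i : Fin n, (_root_.starGraph n).degree i = 2 * (n - 1) := by
  have key : (∑ i : Fin n, (_root_.starGraph n).degree i) + 1 = n + (n - 1) := by
    have hpt : ∀ i : Fin n, (_root_.starGraph n).degree i + (if i = 0 then 1 else 0)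
        = 1 + (if i = 0 then n - 1 else 0) := by
      intro i
      by_cases h : i = 0
      · subst h; rw [star_degree_zero hn]; simp; omega
      · rw [star_degree_ne_zero hn i h]; simp [h]
    calc (∑ i : Fin n, (_root_.starGraph n).degree i) + 1
        = ∑ i : Fin n, ((_root_.starGraph n).degree i + (if i = 0 then 1 else 0)) := by
          rw [Finset.sum_add_distrib]
          congr 1
          rw [Finset.sum_ite_eq' Finset.univ (0 : Fin n) (fun _ => 1)]
          simp
      _ = ∑ i : Fin n, (1 + (if i = 0 then n - 1 else 0)) := Finset.sum_congr rfl fun i _ => hpt i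
      _ = n + (n - 1) := by
          rw [Finset.sum_add_distrib, Finset.sum_const, Finset.card_fin, smul_eq_mul, mul_one,
            Finset.sum_ite_eq' Finset.univ (0 : Fin n) (fun _ => n - 1)]
          simp
  omega

/-- Star graph distances. -/
lemma star_dist [NeZero n] (hn : 2 ≤ n) (i j : Fin n) :
    (_root_.starGraph n).dist i j = if i = j then 0 else if i = 0 ∨ j = 0 then 1 else 2 := by
  by_cases hij : i = j
  · simp [hij]
  · by_cases h0 : i = 0 ∨ j = 0
    · have hadj : (_root_.starGraph n).Adj i j := by
        refine ⟨hij, ?_⟩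
        rcases h0 with h | h
        · exact Or.inl (by simp [h])
        · exact Or.inr (by simp [h])
      simp [hij, h0, SimpleGraph.dist_eq_one_iff_adj.2 hadj]
    · push_neg at h0
      obtain ⟨hi0, hj0⟩ := h0
      have hadj1 : (_root_.starGraph n).Adj i 0 := ⟨hi0, Or.inr (Fin.val_zero n)⟩
      have hadj2 : (_root_.starGraph n).Adj (0 : Fin n) j := ⟨fun h => hj0 h.symm, Or.inl (Fin.val_zero n)⟩
      have hub : (_root_.starGraph n).dist i j ≤ 2 := by
        have := SimpleGraph.dist_le
          (SimpleGraph.Walk.cons hadj1 (SimpleGraph.Walk.cons hadj2 SimpleGraph.Walk.nil))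
        simpa using this
      have hreach : (_root_.starGraph n).Reachable i j :=
        (SimpleGraph.Walk.cons hadj1
          (SimpleGraph.Walk.cons hadj2 SimpleGraph.Walk.nil)).reachable
      have h0' : (_root_.starGraph n).dist i j ≠ 0 :=
        SimpleGraph.dist_ne_zero_iff_ne_and_reachable.2 ⟨hij, hreach⟩
      have h1' : (_root_.starGraph n).dist i j ≠ 1 := by
        intro h
        have hadj := SimpleGraph.dist_eq_one_iff_adj.1 h
        rcases hadj.2 with h | h
        · exact hi0 (Fin.ext (by simp [h]))
        · exact hj0 (Fin.ext (by simp [h]))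
      have : (_root_.starGraph n).dist i j = 2 := by omega
      simp [hij, hi0, hj0, this]

lemma star_totalDist [NeZero n] (hn : 2 ≤ n) :
    totalDist (_root_.starGraph n) = 2 * (n - 1) * (n - 1) := by
  have hrow : ∀ i : Fin n, ∑ j : Fin n, (_root_.starGraph n).dist i j
      = if i = 0 then n - 1 else 2 * n - 3 := by
    intro i
    by_cases hi : i = 0
    · subst hi
      have hpt : ∀ j : Fin n, (_root_.starGraph n).dist 0 j + (if (0 : Fin n) = j then 1 else 0) = 1 := by
        intro j
        rw [star_dist hn]
        by_cases h : (0 : Fin n) = j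
        · simp [h.symm]
        · have h' : j ≠ 0 := fun hh => h hh.symm
          simp [h, h']
      have : (∑ j : Fin n, (_root_.starGraph n).dist 0 j) + 1 = n := by
        calc (∑ j : Fin n, (_root_.starGraph n).dist 0 j) + 1
            = ∑ j : Fin n, ((_root_.starGraph n).dist 0 j + (if (0 : Fin n) = j then 1 else 0)) := by
              rw [Finset.sum_add_distrib, Finset.sum_ite_eq Finset.univ (0 : Fin n) (fun _ => 1)]
              simp
          _ = ∑ _j : Fin n, 1 := Finset.sum_congr rfl fun j _ => hpt j
          _ = n := by simp
      rw [if_pos rfl]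
      omega
    · have hpt : ∀ j : Fin n, (_root_.starGraph n).dist i j
          + (2 * (if i = j then 1 else 0) + (if j = 0 then 1 else 0)) = 2 := by
        intro j
        rw [star_dist hn]
        by_cases h1 : i = j
        · have : j ≠ 0 := fun h => hi (h1.trans h)
          simp [h1, this]
        · by_cases h2 : j = 0
          · simp [h1, h2, hi]
          · simp [h1, h2, hi]
      have : (∑ j : Fin n, (_root_.starGraph n).dist i j) + (2 + 1) = 2 * n := by
        calc (∑ j : Fin n, (_root_.starGraph n).dist i j) + (2 + 1)
            = ∑ j : Fin n, ((_root_.starGraph n).dist i j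
                + (2 * (if i = j then 1 else 0) + (if j = 0 then 1 else 0))) := by
              rw [Finset.sum_add_distrib, Finset.sum_add_distrib, ← Finset.mul_sum,
                Finset.sum_ite_eq Finset.univ i (fun _ => 1),
                Finset.sum_ite_eq' Finset.univ (0 : Fin n) (fun _ => 1)]
              simp
          _ = ∑ _j : Fin n, 2 := Finset.sum_congr rfl fun j _ => hpt j
          _ = 2 * n := by simp [mul_comm]
      simp only [if_neg hi]
      omega
  have key : totalDist (_root_.starGraph n) + (2 * n - 3) = n * (2 * n - 3) + (n - 1) := by
    have hpt : ∀ i : Fin n, (if i = 0 then (n - 1 : ℕ) else 2 * n - 3) + (if i = 0 then 2 * n - 3 else 0)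
        = (2 * n - 3) + (if i = 0 then n - 1 else 0) := by
      intro i
      by_cases h : i = 0 <;> simp [h] <;> omega
    calc totalDist (_root_.starGraph n) + (2 * n - 3)
        = (∑ i : Fin n, (if i = 0 then (n - 1 : ℕ) else 2 * n - 3)) + (2 * n - 3) := by
          rw [totalDist]
          congr 1
          exact Finset.sum_congr rfl fun i _ => hrow i
      _ = ∑ i : Fin n, ((if i = 0 then (n - 1 : ℕ) else 2 * n - 3) + (if i = 0 then 2 * n - 3 else 0)) := by
          rw [Finset.sum_add_distrib, Finset.sum_ite_eq' Finset.univ (0 : Fin n) (fun _ => 2 * n - 3)]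
          simp
      _ = ∑ i : Fin n, ((2 * n - 3) + (if i = 0 then n - 1 else 0)) :=
          Finset.sum_congr rfl fun i _ => hpt i
      _ = n * (2 * n - 3) + (n - 1) := by
          rw [Finset.sum_add_distrib, Finset.sum_const, Finset.card_fin, smul_eq_mul,
            Finset.sum_ite_eq' Finset.univ (0 : Fin n) (fun _ => n - 1)]
          simp
  obtain ⟨m, hm⟩ : ∃ m, n = m + 2 := ⟨n - 2, by omega⟩
  subst hm
  zify [show 3 ≤ 2 * (m + 2) by omega, show 1 ≤ m + 2 by omega] at key ⊢
  linarith [key]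

/-- Secrecy in terms of the degree sum. -/
lemma secrecy_eq (g : SimpleGraph (Fin n)) (p : ℝ) (hn : 2 ≤ n) :
    secrecy g p = ((n : ℝ) * ((n : ℝ) - 1) - p * ((∑ i : Fin n, g.degree i : ℕ) : ℝ))
      / ((n : ℝ) ^ 2) := by
  have hn0 : (n : ℝ) ≠ 0 := by
    have : (0 : ℝ) < n := by exact_mod_cast (by omega : 0 < n)
    linarith
  have hS : ∑ i : Fin n, (p * (g.degree i : ℝ) + 1)
      = p * ((∑ i : Fin n, g.degree i : ℕ) : ℝ) + n := by
    rw [Finset.sum_add_distrib, ← Finset.mul_sum, Finset.sum_const, Finset.card_fin]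
    push_cast
    ring
  rw [secrecy, Finset.sum_sub_distrib, ← Finset.sum_div, hS, Finset.sum_const, Finset.card_fin]
  field_simp
  ring

end Aux

/-- for p ∈ [1/2,1], the star graph is optimal among connected
graphs on n ≥ 2 vertices. -/
theorem star_graph_optimal {n : ℕ} (hn : 2 ≤ n) (p : ℝ)
    (hp0 : 1 / 2 ≤ p) (hp1 : p ≤ 1)
    (g : SimpleGraph (Fin n)) (hg : g.Connected) :
    perf (starGraph n) p ≥ perf g p := by
  haveI : NeZero n := ⟨by omega⟩
  have hNR : (2 : ℝ) ≤ (n : ℝ) := by exact_mod_cast hn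
  have hDg0 : (0 : ℝ) ≤ ((∑ i : Fin n, g.degree i : ℕ) : ℝ) := by positivity
  have hDlb : 2 * ((n : ℝ) - 1) ≤ ((∑ i : Fin n, g.degree i : ℕ) : ℝ) := by
    have h := sum_degree_lb g hg hn
    have h2 : ((2 * (n - 1) : ℕ) : ℝ) ≤ ((∑ i : Fin n, g.degree i : ℕ) : ℝ) := Nat.cast_le.2 h
    rw [Nat.cast_mul, Nat.cast_sub (by omega : 1 ≤ n)] at h2
    push_cast at h2 ⊢
    linarith
  have hDub : ((∑ i : Fin n, g.degree i : ℕ) : ℝ) ≤ (n : ℝ) * ((n : ℝ) - 1) := by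
    have h := sum_degree_ub g
    have h2 : ((∑ i : Fin n, g.degree i : ℕ) : ℝ) ≤ ((n * (n - 1) : ℕ) : ℝ) := Nat.cast_le.2 h
    rw [Nat.cast_mul, Nat.cast_sub (by omega : 1 ≤ n)] at h2
    push_cast at h2 ⊢
    linarith
  have hTlb : 2 * ((n : ℝ) * (n : ℝ) - (n : ℝ))
      ≤ ((totalDist g : ℕ) : ℝ) + ((∑ i : Fin n, g.degree i : ℕ) : ℝ) := by
    have h := totalDist_lb g hg
    have h2 : ((2 * (n * n - n) : ℕ) : ℝ)
        ≤ ((totalDist g + ∑ i : Fin n, g.degree i : ℕ) : ℝ) := Nat.cast_le.2 h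
    rw [Nat.cast_mul, Nat.cast_sub (Nat.le_mul_of_pos_left _ (by omega)), Nat.cast_add] at h2
    push_cast at h2 ⊢
    linarith
  have hBT : 2 * (n : ℝ) * ((n : ℝ) - 1) - ((∑ i : Fin n, g.degree i : ℕ) : ℝ)
      ≤ ((totalDist g : ℕ) : ℝ) := by nlinarith
  have hBpos : (0 : ℝ) < 2 * (n : ℝ) * ((n : ℝ) - 1) - ((∑ i : Fin n, g.degree i : ℕ) : ℝ) := by
    nlinarith
  have hTpos : (0 : ℝ) < ((totalDist g : ℕ) : ℝ) := lt_of_lt_of_le hBpos hBT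
  have hperfG : perf g p = ((n : ℝ) * ((n : ℝ) - 1) - p * ((∑ i : Fin n, g.degree i : ℕ) : ℝ))
      * ((n : ℝ) * ((n : ℝ) - 1)) / ((n : ℝ) ^ 2 * ((totalDist g : ℕ) : ℝ)) := by
    rw [perf, secrecy_eq g p hn, infoMeasure]
    exact div_mul_div_comm _ _ _ _
  have hperfS : perf (starGraph n) p = ((n : ℝ) - 2 * p) / (2 * (n : ℝ)) := by
    rw [perf, secrecy_eq (starGraph n) p hn, infoMeasure, star_sum_degree hn,
      star_totalDist hn]
    have h1 : ((2 * (n - 1) : ℕ) : ℝ) = 2 * ((n : ℝ) - 1) := by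
      rw [Nat.cast_mul, Nat.cast_sub (by omega : 1 ≤ n)]; push_cast; ring
    have h2 : ((2 * (n - 1) * (n - 1) : ℕ) : ℝ) = 2 * ((n : ℝ) - 1) * ((n : ℝ) - 1) := by
      rw [Nat.cast_mul, Nat.cast_mul, Nat.cast_sub (by omega : 1 ≤ n)]; push_cast; ring
    rw [h1, h2]
    have hNne : (n : ℝ) ≠ 0 := by linarith
    have hN1ne : (n : ℝ) - 1 ≠ 0 := by linarith
    field_simp
  have hA : (0 : ℝ) ≤ (n : ℝ) * ((n : ℝ) - 1) - p * ((∑ i : Fin n, g.degree i : ℕ) : ℝ) := by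
    nlinarith [mul_nonneg (sub_nonneg.2 hp1) hDg0]
  have hkey : perf g p ≤ ((n : ℝ) - 2 * p) / (2 * (n : ℝ)) := by
    rw [hperfG, div_le_div_iff₀ (by positivity) (by linarith : (0:ℝ) < 2 * (n : ℝ))]
    have h1 : (0 : ℝ) ≤ (n : ℝ) ^ 2 * (((n : ℝ) - 2 * p)
        * (((totalDist g : ℕ) : ℝ) - (2 * (n : ℝ) * ((n : ℝ) - 1)
          - ((∑ i : Fin n, g.degree i : ℕ) : ℝ)))) :=
      mul_nonneg (by positivity) (mul_nonneg (by linarith) (by linarith))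
    have h2 : (0 : ℝ) ≤ (n : ℝ) ^ 2 * ((2 * p - 1)
        * (((∑ i : Fin n, g.degree i : ℕ) : ℝ) - 2 * ((n : ℝ) - 1))) :=
      mul_nonneg (by positivity) (mul_nonneg (by linarith) (by linarith))
    nlinarith [h1, h2]
  rw [ge_iff_le, hperfS]
  exact hkey
end
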